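/- Let W be the random walk matrix of a strongly connected irreducible Markov chain with stationary distribution s, and for vertices u ≠ v let h^v ∈ R^n be the vector of hitting times to v (h^v_u = H_{uv}). Then H_{uv} = (1 − (1/s_v)·1_v)ᵀ (I − W)† (1_u − 1_v), where 1 is the all-ones vector, 1_u, 1_v are standard basis vectors, and † denotes Moore–Penrose pseudoinverse. -/
import Mathlib
open Matrix Finset

lemma pow_entry_nonneg {n : ℕ} (W : Matrix (Fin n) (Fin n) ℝ)
    (hWnn : ∀ i j, 0 ≤ W i j) : ∀ k i j, 0 ≤ (W ^ k) i j := by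
  intro k
  induction k with
  | zero => intro i j; simp [Matrix.one_apply]; split <;> norm_num
  | succ k ih =>
    intro i j
    rw [pow_succ, Matrix.mul_apply]
    exact Finset.sum_nonneg fun l _ => mul_nonneg (ih i l) (hWnn l j)

lemma pow_col_sum {n : ℕ} (W : Matrix (Fin n) (Fin n) ℝ)
    (hWcol : ∀ j, ∑ i, W i j = 1) : ∀ k j, ∑ i, (W ^ k) i j = 1 := by
  intro k
  induction k with
  | zero => intro j; simp [Matrix.one_apply]
  | succ k ih =>
    intro j
    simp only [pow_succ, Matrix.mul_apply]
    rw [Finset.sum_comm]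
    calc ∑ l, ∑ i, (W ^ k) i l * W l j
        = ∑ l, (∑ i, (W ^ k) i l) * W l j := by
          simp [Finset.sum_mul]
      _ = ∑ l, W l j := by simp [ih]
      _ = 1 := hWcol j

lemma ker_const {n : ℕ} (W : Matrix (Fin n) (Fin n) ℝ)
    (hWnn : ∀ i j, 0 ≤ W i j) (hWcol : ∀ j, ∑ i, W i j = 1)
    (hirr : ∀ i j : Fin n, ∃ k : ℕ, 0 < (W ^ k) i j)
    (x : Fin n → ℝ) (hx : Matrix.vecMul x W = x) (a b : Fin n) :
    x a = x b := by
  have hxk : ∀ k, Matrix.vecMul x (W ^ k) = x := by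
    intro k
    induction k with
    | zero => simp
    | succ k ih => rw [pow_succ, ← Matrix.vecMul_vecMul, ih, hx]
  have hne : (univ : Finset (Fin n)).Nonempty := ⟨a, mem_univ a⟩
  obtain ⟨i, _, hi⟩ := Finset.exists_max_image univ x hne
  suffices hall : ∀ j, x j = x i by rw [hall a, hall b]
  intro j
  obtain ⟨k, hk⟩ := hirr j i
  have hxi : ∑ z, (W ^ k) z i * x z = x i := by
    have := congrFun (hxk k) i
    simpa [Matrix.vecMul, dotProduct, mul_comm] using this
  have hsum0 : ∑ z, (W ^ k) z i * (x i - x z) = 0 := by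
    have hc := pow_col_sum W hWcol k i
    calc ∑ z, (W ^ k) z i * (x i - x z)
        = (∑ z, (W ^ k) z i) * x i - ∑ z, (W ^ k) z i * x z := by
          rw [Finset.sum_mul, ← Finset.sum_sub_distrib]
          congr 1; ext z; ring
      _ = 0 := by rw [hc, hxi]; ring
  have hterm : (W ^ k) j i * (x i - x j) = 0 := by
    have hnn : ∀ z ∈ univ, 0 ≤ (W ^ k) z i * (x i - x z) := fun z _ =>
      mul_nonneg (pow_entry_nonneg W hWnn k z i) (sub_nonneg.2 (hi z (mem_univ z)))
    exact (Finset.sum_eq_zero_iff_of_nonneg hnn).1 hsum0 j (mem_univ j)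
  have := mul_eq_zero.1 hterm
  rcases this with h1 | h2
  · exact absurd h1 (ne_of_gt hk)
  · linarith [sub_eq_zero.1 h2]

def IsMoorePenrose {m : Type*} [Fintype m] [DecidableEq m]
    (A B : Matrix m m ℝ) : Prop :=
  A * B * A = A ∧ B * A * B = B ∧ (A * B)ᵀ = A * B ∧ (B * A)ᵀ = B * A

theorem hitting_time_formula {n : ℕ} (W : Matrix (Fin n) (Fin n) ℝ)
    (hWnn : ∀ i j, 0 ≤ W i j) (hWcol : ∀ j, ∑ i, W i j = 1)
    (hirr : ∀ i j : Fin n, ∃ k : ℕ, 0 < (W ^ k) i j)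
    (s : Fin n → ℝ) (hs : ∀ i, 0 ≤ s i) (hs1 : ∑ i, s i = 1)
    (hstat : W.mulVec s = s)
    (u v : Fin n) (hne : u ≠ v)
    (h : Fin n → ℝ) (hhv : h v = 0)
    (hrec : ∀ w : Fin n, w ≠ v → h w = 1 + ∑ z, W z w * h z)
    (Lp : Matrix (Fin n) (Fin n) ℝ)
    (hLp : IsMoorePenrose ((1 : Matrix (Fin n) (Fin n) ℝ) - W) Lp) :
    h u = ((1 : Fin n → ℝ) - (s v)⁻¹ • (Pi.single v 1 : Fin n → ℝ)) ⬝ᵥ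
        Lp.mulVec ((Pi.single u 1 : Fin n → ℝ) - Pi.single v 1) := by
  set L : Matrix (Fin n) (Fin n) ℝ := 1 - W with hLdef
  set e : Fin n → ℝ := (Pi.single u 1 : Fin n → ℝ) - Pi.single v 1 with hedef
  -- s v > 0
  have hstatk : ∀ k, (W ^ k).mulVec s = s := by
    intro k
    induction k with
    | zero => simp
    | succ k ih => rw [pow_succ, ← Matrix.mulVec_mulVec, hstat, ih]
  have hsv : 0 < s v := by
    obtain ⟨j0, hj0⟩ : ∃ j0, 0 < s j0 := by
      by_contra hcon
      push_neg at hcon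
      have : ∑ i, s i ≤ 0 := Finset.sum_nonpos fun i _ => hcon i
      linarith
    obtain ⟨k, hk⟩ := hirr v j0
    have hsv' : s v = ∑ j, (W ^ k) v j * s j := by
      have := congrFun (hstatk k) v
      simpa [Matrix.mulVec, dotProduct] using this.symm
    have hle : (W ^ k) v j0 * s j0 ≤ ∑ j, (W ^ k) v j * s j :=
      Finset.single_le_sum
        (f := fun j => (W ^ k) v j * s j)
        (fun j _ => mul_nonneg (pow_entry_nonneg W hWnn k v j) (hs j)) (mem_univ j0)
    have : 0 < (W ^ k) v j0 * s j0 := mul_pos hk hj0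
    linarith
  have hsvne : s v ≠ 0 := ne_of_gt hsv
  -- Step A : vecMul h L = 𝟙 - s_v⁻¹ • e_v
  have hLs : L.mulVec s = 0 := by
    rw [hLdef, Matrix.sub_mulVec, Matrix.one_mulVec, hstat, sub_self]
  have hg : ∀ w, w ≠ v → Matrix.vecMul h L w = 1 := by
    intro w hw
    have : Matrix.vecMul h L w = h w - ∑ z, W z w * h z := by
      simp only [hLdef, Matrix.vecMul, dotProduct, Matrix.sub_apply, Matrix.one_apply,
        mul_sub]
      rw [Finset.sum_sub_distrib]
      congr 1
      · simp [mul_comm]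
      · exact Finset.sum_congr rfl fun z _ => by ring
    rw [this, hrec w hw]; ring
  have hdot0 : Matrix.vecMul h L ⬝ᵥ s = 0 := by
    rw [← Matrix.dotProduct_mulVec, hLs, dotProduct_zero]
  have hgv : Matrix.vecMul h L v = 1 - (s v)⁻¹ := by
    have hsplit : ∑ w, Matrix.vecMul h L w * s w
        = Matrix.vecMul h L v * s v + ∑ w ∈ univ.erase v, s w := by
      rw [← Finset.add_sum_erase univ (fun w => Matrix.vecMul h L w * s w) (mem_univ v)]
      congr 1
      exact Finset.sum_congr rfl fun w hw => by
        rw [hg w (Finset.mem_erase.1 hw).1, one_mul]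
    have hrest : ∑ w ∈ univ.erase v, s w = 1 - s v := by
      have := Finset.add_sum_erase univ s (mem_univ v)
      rw [hs1] at this
      linarith
    have h0 : Matrix.vecMul h L v * s v + (1 - s v) = 0 := by
      rw [← hrest, ← hsplit]
      simpa [dotProduct] using hdot0
    field_simp
    linarith [mul_comm (Matrix.vecMul h L v) (s v)]
  have hA : Matrix.vecMul h L
      = (1 : Fin n → ℝ) - (s v)⁻¹ • (Pi.single v 1 : Fin n → ℝ) := by
    funext w
    by_cases hw : w = v
    · subst hw
      simp [hgv, Pi.single_apply]
    · simp [hg w hw, Pi.single_apply, hw]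
  -- Step B : (L * Lp).mulVec e = e
  have hPL : (1 - L * Lp) * L = 0 := by
    rw [sub_mul, one_mul, hLp.1, sub_self]
  have hLtP : Lᵀ * (1 - L * Lp) = 0 := by
    have h2 : (1 - L * Lp)ᵀ = 1 - L * Lp := by
      rw [Matrix.transpose_sub, Matrix.transpose_one, hLp.2.2.1]
    calc Lᵀ * (1 - L * Lp) = Lᵀ * (1 - L * Lp)ᵀ := by rw [h2]
      _ = ((1 - L * Lp) * L)ᵀ := (Matrix.transpose_mul _ _).symm
      _ = 0 := by rw [hPL, Matrix.transpose_zero]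
  set y : Fin n → ℝ := (1 - L * Lp).mulVec e with hydef
  have hP : Matrix.vecMul y W = y := by
    have h0 : Matrix.vecMul y L = 0 := by
      rw [hydef, ← Matrix.mulVec_transpose, Matrix.mulVec_mulVec, hLtP,
        Matrix.zero_mulVec]
    rw [hLdef, Matrix.vecMul_sub, Matrix.vecMul_one] at h0
    have := sub_eq_zero.1 h0
    rw [← this]
  have hyc : ∀ a b : Fin n, y a = y b := fun a b =>
    ker_const W hWnn hWcol hirr y hP a b
  have hones : Matrix.vecMul (fun _ => (1:ℝ)) L = 0 := by
    funext j
    simp only [hLdef, Matrix.vecMul, dotProduct, Matrix.sub_apply, Matrix.one_apply,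
      one_mul]
    rw [Finset.sum_sub_distrib]
    simp [hWcol j]
  have hsum0 : ∑ j, y j = 0 := by
    have h1 : ∑ j, y j = (fun _ => (1:ℝ)) ⬝ᵥ y := by simp [dotProduct]
    have h2 : (fun _ => (1:ℝ)) ⬝ᵥ y = Matrix.vecMul (fun _ => (1:ℝ)) (1 - L * Lp) ⬝ᵥ e := by
      rw [hydef, Matrix.dotProduct_mulVec]
    have h3 : Matrix.vecMul (fun _ => (1:ℝ)) (1 - L * Lp) = fun _ => (1:ℝ) := by
      rw [Matrix.vecMul_sub, Matrix.vecMul_one, ← Matrix.vecMul_vecMul, hones,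
        Matrix.zero_vecMul, sub_zero]
    have h4 : (fun _ => (1:ℝ)) ⬝ᵥ e = 0 := by
      simp [hedef, dotProduct, Finset.sum_sub_distrib, Pi.single_apply]
    rw [h1, h2, h3, h4]
  have hy : y = 0 := by
    funext j
    have hsame : ∑ i : Fin n, y i = (n : ℝ) * y j := by
      rw [Finset.sum_congr rfl fun i _ => hyc i j, Finset.sum_const,
        Finset.card_univ, Fintype.card_fin, nsmul_eq_mul]
    rw [hsum0] at hsame
    have hn0 : (0:ℝ) < n := by exact_mod_cast Fin.pos u
    have := (mul_eq_zero.1 hsame.symm).resolve_left (ne_of_gt hn0)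
    simpa using this
  have hPe : (L * Lp).mulVec e = e := by
    rw [hydef, Matrix.sub_mulVec, Matrix.one_mulVec] at hy
    exact (sub_eq_zero.1 hy).symm
  -- Final chain
  rw [← hA, Matrix.dotProduct_mulVec, Matrix.vecMul_vecMul]
  rw [← Matrix.dotProduct_mulVec, hPe]
  simp [hedef, dotProduct, Pi.single_apply, Finset.mul_sum, mul_sub,
    Finset.sum_sub_distrib, hhv, hne]
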